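/- Fix r ∈ (0, 1) with (1 - r²)·cos r - 2r ≥ 0. Then for every β ∈ [0, 1], one has β + ((1 - β²)/(1 - r²))·(r / cos r) ≤ 1. -/
import Mathlib


theorem stmt_6 (r : ℝ) (hr : r ∈ Set.Ioo (0 : ℝ) 1)
    (hk : (1 - r ^ 2) * Real.cos r - 2 * r ≥ 0) :
    ∀ β ∈ Set.Icc (0 : ℝ) 1,
      β + (1 - β ^ 2) / (1 - r ^ 2) * (r / Real.cos r) ≤ 1 := by
  intro β hβ
  obtain ⟨hr0, hr1⟩ := hr
  obtain ⟨hβ0, hβ1⟩ := hβ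
  have hc : Real.cos r > 0 := by
    apply Real.cos_pos_of_mem_Ioo
    constructor
    · linarith [Real.pi_gt_three]
    · linarith [Real.pi_gt_three]
  have hd : (1 - r ^ 2) > 0 := by nlinarith
  rw [div_mul_div_comm]
  have key : (1 - β ^ 2) * r / ((1 - r ^ 2) * Real.cos r) ≤ 1 - β := by
    rw [div_le_iff₀ (by positivity)]
    nlinarith [mul_nonneg (sub_nonneg.2 hβ1) (mul_nonneg hr0.le (sub_nonneg.2 hβ1)), mul_nonneg (sub_nonneg.2 hβ1) hk.le]
  linarith
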